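/- Any intersection of finitely many closed hemispheres {S ∈ S² : Mᵢ · S ≥ 0} (Mᵢ ≠ 0) of the unit sphere S² in ℝ³ falls into exactly one of the following topological categories: (1) it has nonempty interior in S² (a spherical polygonal region, possibly all of S²), (2) it is a nonempty subset of a single great circle, or (3) it is empty. -/

import Mathlib

open Matrix

lemma hic_dp_cont (M : Fin 3 → ℝ) : Continuous fun x : Fin 3 → ℝ => M ⬝ᵥ x := by
  simp only [dotProduct]
  exact continuous_finset_sum _ fun i _ => continuous_const.mul (continuous_apply i)

lemma hic_dp_linear (M : Fin 3 → ℝ) : IsLinearMap ℝ (fun x : Fin 3 → ℝ => M ⬝ᵥ x) :=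
  ⟨fun x y => dotProduct_add M x y, fun c x => dotProduct_smul c M x⟩

lemma hic_dp_self_nonneg (x : Fin 3 → ℝ) : 0 ≤ x ⬝ᵥ x :=
  Finset.sum_nonneg fun i _ => mul_self_nonneg _

lemma hic_dp_self_pos {x : Fin 3 → ℝ} (hx : x ≠ 0) : 0 < x ⬝ᵥ x :=
  lt_of_le_of_ne (hic_dp_self_nonneg x) (fun h => hx (dotProduct_self_eq_zero.mp h.symm))

lemma hic_normalize {x : Fin 3 → ℝ} (hx : x ≠ 0) :
    ((Real.sqrt (x ⬝ᵥ x))⁻¹ • x) ⬝ᵥ ((Real.sqrt (x ⬝ᵥ x))⁻¹ • x) = 1 := by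
  set d := x ⬝ᵥ x with hd
  have hp := hic_dp_self_pos hx
  have hs : Real.sqrt (x ⬝ᵥ x) * Real.sqrt (x ⬝ᵥ x) = x ⬝ᵥ x := Real.mul_self_sqrt hp.le
  have hs0 : Real.sqrt (x ⬝ᵥ x) ≠ 0 := by positivity
  rw [smul_dotProduct, dotProduct_smul, smul_eq_mul, smul_eq_mul, ← hd]
  field_simp
  have hd0 : 0 < d := hp
  rw [Real.sq_sqrt hd0.le, div_self hd0.ne']

lemma hic_perturb {U : Set (Fin 3 → ℝ)} (hU : IsOpen U) {S M : Fin 3 → ℝ}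
    (hS : S ⬝ᵥ S = 1) (hSU : S ∈ U) (hM : M ≠ 0) (hMS : M ⬝ᵥ S = 0) :
    ∃ S', S' ∈ U ∧ S' ⬝ᵥ S' = 1 ∧ M ⬝ᵥ S' ≠ 0 := by
  set m := M ⬝ᵥ M with hm
  have hm0 : 0 < m := hic_dp_self_pos hM
  have hq : ∀ t : ℝ, 0 < 1 + t * t * m := fun t => by nlinarith [mul_self_nonneg t]
  set f : ℝ → (Fin 3 → ℝ) := fun t => (Real.sqrt (1 + t * t * m))⁻¹ • (S + t • M) with hf
  have hsne : ∀ t : ℝ, Real.sqrt (1 + t * t * m) ≠ 0 :=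
    fun t => Real.sqrt_ne_zero'.mpr (hq t)
  have hcont : Continuous f := by
    refine Continuous.smul (f := fun t => (Real.sqrt (1 + t * t * m))⁻¹) (g := fun t => S + t • M) ?_ ?_
    · exact (Real.continuous_sqrt.comp (by continuity)).inv₀ hsne
    · continuity
  have hf0 : f 0 = S := by simp [hf]
  have h0pre : (0:ℝ) ∈ f ⁻¹' U := by simp [Set.mem_preimage, hf0, hSU]
  obtain ⟨ε, hε, hball⟩ := Metric.isOpen_iff.mp (hU.preimage hcont) 0 h0pre
  have htball : ε / 2 ∈ Metric.ball (0:ℝ) ε := by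
    simp only [Metric.mem_ball, Real.dist_eq, sub_zero]
    rw [abs_of_pos (by linarith)]
    linarith
  set t : ℝ := ε / 2 with ht
  have ht0 : t ≠ 0 := by positivity
  have hSM : S ⬝ᵥ M = 0 := by rw [dotProduct_comm]; exact hMS
  have hinner : (S + t • M) ⬝ᵥ (S + t • M) = 1 + t * t * m := by
    simp only [add_dotProduct, dotProduct_add, smul_dotProduct, dotProduct_smul,
      smul_eq_mul, hS, hMS, hSM, ← hm]
    ring
  have hc : Real.sqrt (1 + t * t * m) * Real.sqrt (1 + t * t * m) = 1 + t * t * m :=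
    Real.mul_self_sqrt (hq t).le
  refine ⟨f t, hball htball, ?_, ?_⟩
  · show ((Real.sqrt (1 + t * t * m))⁻¹ • (S + t • M)) ⬝ᵥ
      ((Real.sqrt (1 + t * t * m))⁻¹ • (S + t • M)) = 1
    rw [smul_dotProduct, dotProduct_smul, smul_eq_mul, smul_eq_mul, hinner]
    field_simp
    rw [Real.sq_sqrt (by nlinarith [hq t])]
  · show M ⬝ᵥ ((Real.sqrt (1 + t * t * m))⁻¹ • (S + t • M)) ≠ 0
    rw [dotProduct_smul, dotProduct_add, dotProduct_smul, hMS, smul_eq_mul, ← hm,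
      smul_eq_mul]
    have : (0:ℝ) < t * m := by positivity
    intro hcontra
    have h1 : (Real.sqrt (1 + t * t * m))⁻¹ ≠ 0 := inv_ne_zero (hsne t)
    have h2 : (0:ℝ) + t * m ≠ 0 := by linarith
    exact (mul_ne_zero h1 h2) hcontra

lemma hic_interior_strict {n : ℕ} {Ms : Fin n → (Fin 3 → ℝ)} (hMs : ∀ i, Ms i ≠ 0)
    {x : Fin 3 → ℝ} (hx : x ∈ interior {y : Fin 3 → ℝ | ∀ i, 0 ≤ Ms i ⬝ᵥ y}) (i : Fin n) :
    0 < Ms i ⬝ᵥ x := by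
  obtain ⟨ε, hε, hball⟩ := Metric.mem_nhds_iff.mp (mem_interior_iff_mem_nhds.mp hx)
  set N := ‖Ms i‖ with hN
  have hNnn : 0 ≤ N := norm_nonneg _
  have h2 : (0:ℝ) < 2 * (N + 1) := by linarith
  set δ : ℝ := ε / (2 * (N + 1)) with hδ
  have hδ0 : 0 < δ := div_pos hε h2
  have hδm : δ * (2 * (N + 1)) = ε := div_mul_cancel₀ _ (ne_of_gt h2)
  have hδlt : δ * N < ε := by nlinarith
  have hy : x - δ • Ms i ∈ Metric.ball x ε := by
    rw [Metric.mem_ball, dist_eq_norm]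
    have : x - δ • Ms i - x = -(δ • Ms i) := by abel
    rw [this, norm_neg, norm_smul, Real.norm_eq_abs, abs_of_pos hδ0]
    exact hδlt
  have hyK := hball hy i
  simp only [Set.mem_setOf_eq, dotProduct_sub, dotProduct_smul, smul_eq_mul] at hyK
  have hself : 0 < Ms i ⬝ᵥ Ms i := hic_dp_self_pos (hMs i)
  nlinarith

lemma hic_plane {n : ℕ} {Ms : Fin n → (Fin 3 → ℝ)} (hMs : ∀ i, Ms i ≠ 0)
    (hA : ¬ ∃ x : Fin 3 → ℝ, x ≠ 0 ∧ ∀ i, 0 < Ms i ⬝ᵥ x) :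
    ∃ M : Fin 3 → ℝ, M ≠ 0 ∧ ∀ x, (∀ i, 0 ≤ Ms i ⬝ᵥ x) → M ⬝ᵥ x = 0 := by
  set K : Set (Fin 3 → ℝ) := {y | ∀ i, 0 ≤ Ms i ⬝ᵥ y} with hK
  have h0K : (0:Fin 3 → ℝ) ∈ K := fun i => by simp
  have hint : interior K = ∅ := by
    by_contra h
    obtain ⟨x, hx⟩ := Set.nonempty_iff_ne_empty.mpr h
    have hstrict := fun i => hic_interior_strict hMs hx i
    rcases isEmpty_or_nonempty (Fin n) with he | hne
    · refine hA ⟨Pi.single 0 1, ?_, fun i => (he.false i).elim⟩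
      intro h0
      have := congrFun h0 0
      simp at this
    · have hx0 : x ≠ 0 := by
        intro h0
        have := hstrict hne.some
        rw [h0] at this
        simp at this
      exact hA ⟨x, hx0, hstrict⟩
  have hconv : Convex ℝ K := by
    have hKe : K = ⋂ i, {y : Fin 3 → ℝ | 0 ≤ Ms i ⬝ᵥ y} := by
      ext y; simp [hK]
    rw [hKe]
    exact convex_iInter fun i => convex_halfSpace_ge (hic_dp_linear (Ms i)) 0
  have hspan : Submodule.span ℝ K ≠ ⊤ := by
    intro htop
    have hvs : vectorSpan ℝ K = ⊤ := by
      rw [eq_top_iff, ← htop, Submodule.span_le]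
      intro y hy
      simpa using vsub_mem_vectorSpan ℝ hy h0K
    have haff : affineSpan ℝ K = ⊤ :=
      (AffineSubspace.affineSpan_eq_top_iff_vectorSpan_eq_top_of_nonempty ℝ _ _ ⟨0, h0K⟩).mpr hvs
    have hne := (hconv.interior_nonempty_iff_affineSpan_eq_top).mpr haff
    rw [hint] at hne
    exact Set.not_nonempty_empty hne
  obtain ⟨f, hf0, hfbot⟩ := Submodule.exists_dual_map_eq_bot_of_lt_top
    (lt_top_iff_ne_top.mpr hspan) inferInstance
  set M : Fin 3 → ℝ := fun i => f (fun j => if i = j then 1 else 0) with hMdef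
  have hfx : ∀ x : Fin 3 → ℝ, f x = M ⬝ᵥ x := by
    intro x
    rw [LinearMap.pi_apply_eq_sum_univ f x, dotProduct]
    exact Finset.sum_congr rfl fun i _ => by rw [smul_eq_mul, mul_comm]
  refine ⟨M, ?_, ?_⟩
  · intro hM0
    apply hf0
    refine LinearMap.ext fun x => ?_
    rw [hfx x, hM0]
    simp
  · intro x hxK
    have hmem : f x ∈ (Submodule.span ℝ K).map f :=
      Submodule.mem_map_of_mem (Submodule.subset_span hxK)
    rw [hfbot, Submodule.mem_bot] at hmem
    rw [← hfx x]
    exact hmem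


/-- Theorem 3 of the paper: any intersection of finitely many
closed hemispheres of the unit sphere S² falls into exactly one of three
categories: (1) nonempty interior in S² (spherical polygonal region),
(2) a nonempty subset of a single great circle, or (3) empty. -/
theorem hemisphere_intersection_classification (n : ℕ)
    (Ms : Fin n → (Fin 3 → ℝ)) (hMs : ∀ i, Ms i ≠ 0)
    (C : Set (Fin 3 → ℝ))
    (hC : C = {S | S ⬝ᵥ S = 1} ∩ ⋂ i : Fin n, {S | Ms i ⬝ᵥ S ≥ 0}) :
    letI P₁ : Prop := ∃ U : Set (Fin 3 → ℝ), IsOpen U ∧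
      (U ∩ {S | S ⬝ᵥ S = 1}).Nonempty ∧ U ∩ {S | S ⬝ᵥ S = 1} ⊆ C
    letI P₂ : Prop := C.Nonempty ∧
      ∃ M : Fin 3 → ℝ, M ≠ 0 ∧ C ⊆ {S | M ⬝ᵥ S = 0}
    letI P₃ : Prop := C = ∅
    (P₁ ∨ P₂ ∨ P₃) ∧ ¬(P₁ ∧ P₂) ∧ ¬(P₁ ∧ P₃) ∧ ¬(P₂ ∧ P₃) := by

  have hsub : ∀ S, S ∈ C → ∀ i, 0 ≤ Ms i ⬝ᵥ S := by
    intro S hS i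
    rw [hC] at hS
    exact Set.mem_iInter.mp hS.2 i
  have h12 : ¬((∃ U : Set (Fin 3 → ℝ), IsOpen U ∧ (U ∩ {S | S ⬝ᵥ S = 1}).Nonempty ∧ U ∩ {S | S ⬝ᵥ S = 1} ⊆ C) ∧ (C.Nonempty ∧ ∃ M : Fin 3 → ℝ, M ≠ 0 ∧ C ⊆ {S | M ⬝ᵥ S = 0})) := by
    rintro ⟨⟨U, hUo, ⟨S, hSU, hSs⟩, hUC⟩, -, M, hM0, hCplane⟩
    have hMS : M ⬝ᵥ S = 0 := hCplane (hUC ⟨hSU, hSs⟩)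
    obtain ⟨S', hS'U, hS's, hS'M⟩ := hic_perturb hUo hSs hSU hM0 hMS
    exact hS'M (hCplane (hUC ⟨hS'U, hS's⟩))
  have h13 : ¬((∃ U : Set (Fin 3 → ℝ), IsOpen U ∧ (U ∩ {S | S ⬝ᵥ S = 1}).Nonempty ∧ U ∩ {S | S ⬝ᵥ S = 1} ⊆ C) ∧ C = ∅) := by
    rintro ⟨⟨U, hUo, ⟨S, hSU, hSs⟩, hUC⟩, hCE⟩
    have hmem := hUC ⟨hSU, hSs⟩
    rw [hCE] at hmem
    exact hmem
  have h23 : ¬((C.Nonempty ∧ ∃ M : Fin 3 → ℝ, M ≠ 0 ∧ C ⊆ {S | M ⬝ᵥ S = 0}) ∧ C = ∅) := by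
    rintro ⟨⟨⟨S, hS⟩, -⟩, hCE⟩
    rw [hCE] at hS
    exact hS
  refine ⟨?_, h12, h13, h23⟩
  rcases Set.eq_empty_or_nonempty C with hE | hne
  · exact Or.inr (Or.inr hE)
  by_cases hA : ∃ x : Fin 3 → ℝ, x ≠ 0 ∧ ∀ i, 0 < Ms i ⬝ᵥ x
  · obtain ⟨x, hx0, hxs⟩ := hA
    left
    refine ⟨⋂ i, {S : Fin 3 → ℝ | 0 < Ms i ⬝ᵥ S}, ?_, ?_, ?_⟩
    · exact isOpen_iInter_of_finite fun i =>
        isOpen_lt continuous_const (hic_dp_cont (Ms i))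
    · refine ⟨(Real.sqrt (x ⬝ᵥ x))⁻¹ • x, ?_, hic_normalize hx0⟩
      have hcpos : 0 < (Real.sqrt (x ⬝ᵥ x))⁻¹ := by
        have := hic_dp_self_pos hx0
        positivity
      refine Set.mem_iInter.mpr fun i => ?_
      show 0 < Ms i ⬝ᵥ ((Real.sqrt (x ⬝ᵥ x))⁻¹ • x)
      rw [dotProduct_smul, smul_eq_mul]
      exact mul_pos hcpos (hxs i)
    · rintro S ⟨hS1, hS2⟩
      rw [hC]
      refine ⟨hS2, Set.mem_iInter.mpr fun i => ?_⟩
      show Ms i ⬝ᵥ S ≥ 0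
      exact le_of_lt (Set.mem_iInter.mp hS1 i : 0 < Ms i ⬝ᵥ S)
  · right; left
    obtain ⟨M, hM0, hMperp⟩ := hic_plane hMs hA
    exact ⟨hne, M, hM0, fun S hS => hMperp S (hsub S hS)⟩
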